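/- The ρ-semilinear endomorphism L = ψ^{-1} ∘ ι ∘ ⋀²φ of ⋀²V satisfies L ∘ L = vol(H,d) · id_{⋀²V}; in particular L squares to multiplication by the scalar vol(H,d) ∈ F^×. -/

import Mathlib

/-- The canonical generator `v₁ ∧ ⋯ ∧ vₙ` of the `n`-th exterior power, as an element of the
submodule `⋀[E]^n V` of the exterior algebra. -/
noncomputable def wedgeι (E : Type*) [CommRing E] {V : Type*} [AddCommGroup V] [Module E V]
    (n : ℕ) (v : Fin n → V) : ⋀[E]^n V :=
  ⟨ExteriorAlgebra.ιMulti E n v, ExteriorAlgebra.ιMulti_range E n (Set.mem_range_self v)⟩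

/-- The wedge (exterior) product `⋀²V × ⋀²V → ⋀⁴V`. -/
noncomputable def wedgeMul (E : Type*) [CommRing E] {V : Type*} [AddCommGroup V] [Module E V]
    (x y : ⋀[E]^2 V) : ⋀[E]^4 V :=
  ⟨(x : ExteriorAlgebra E V) * (y : ExteriorAlgebra E V), by
    have h := Submodule.mul_mem_mul x.2 y.2
    have e : (⋀[E]^2 V) * (⋀[E]^2 V) = ⋀[E]^4 V := by
      show LinearMap.range (ExteriorAlgebra.ι E (M := V)) ^ 2 *
          LinearMap.range (ExteriorAlgebra.ι E (M := V)) ^ 2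
        = LinearMap.range (ExteriorAlgebra.ι E (M := V)) ^ 4
      rw [← pow_add]
    exact e ▸ h⟩

/-- `h` is a form on `⋀^r V`, additive in each variable, `ρ`-sesquilinear, conjugate-symmetric,
whose value on decomposable wedges is the determinant `det (H (v i) (w j))`. -/
def IsDetForm {E : Type*} [Field E] (ρ : E →+* E)
    {V : Type*} [AddCommGroup V] [Module E V] (H : V → V → E) (r : ℕ)
    (h : (⋀[E]^r V) → (⋀[E]^r V) → E) : Prop :=
  (∀ x y z, h (x + y) z = h x z + h y z) ∧
  (∀ x y z, h x (y + z) = h x y + h x z) ∧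
  (∀ (a b : E) (x y : ⋀[E]^r V), h (a • x) (b • y) = ρ a * h x y * b) ∧
  (∀ x y, h x y = ρ (h y x)) ∧
  (∀ v w : Fin r → V,
    h (wedgeι E r v) (wedgeι E r w) = (Matrix.of fun i j => H (v i) (w j)).det)


open ExteriorAlgebra

set_option maxHeartbeats 3200000


open Module

section Ortho

variable {E : Type*} [Field E]

lemma exists_anisotropic (ρ : E →+* E) (hρ_ne : ρ ≠ RingHom.id E)
    {V : Type*} [AddCommGroup V] [Module E V] [Nontrivial V]
    (H : V → V → E)
    (H_add_left : ∀ x y z, H (x + y) z = H x z + H y z)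
    (H_add_right : ∀ x y z, H x (y + z) = H x y + H x z)
    (H_smul : ∀ (a b : E) (x y : V), H (a • x) (b • y) = ρ a * H x y * b)
    (H_conj : ∀ x y, H x y = ρ (H y x))
    (H_nondeg : ∀ x, (∀ y, H x y = 0) → x = 0) :
    ∃ v : V, H v v ≠ 0 := by
  by_contra hiso
  push_neg at hiso
  have key : ∀ x y : V, H x y + ρ (H x y) = 0 := by
    intro x y
    have h0 := hiso (x + y)
    rw [H_add_left, H_add_right, H_add_right, hiso x, hiso y] at h0
    have h1 : H x y + H y x = 0 := by linear_combination h0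
    rw [H_conj y x] at h1
    exact h1
  have hzero : ∀ x y : V, H x y = 0 := by
    intro x y
    by_contra hc
    have hsm : ∀ α : E, H x (α • y) = H x y * α := by
      intro α
      have := H_smul 1 α x y
      simpa using this
    have hρc : ρ (H x y) = -(H x y) := by
      have := key x y
      linear_combination this
    apply hρ_ne
    ext α
    have h2 := key x (α • y)
    rw [hsm] at h2
    rw [map_mul, hρc] at h2
    have h3 : H x y * (α - ρ α) = 0 := by ring_nf; linear_combination h2
    rcases mul_eq_zero.1 h3 with h | h
    · exact absurd h hc
    · have : ρ α = α := by linear_combination -h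
      simpa using this
  obtain ⟨x, hx⟩ := exists_ne (0 : V)
  exact hx (H_nondeg x (hzero x))

lemma exists_orthogonal_basis (ρ : E →+* E) (hρ_ne : ρ ≠ RingHom.id E) :
    ∀ (n : ℕ) (V : Type u) [AddCommGroup V] [Module E V] [FiniteDimensional E V],
    Module.finrank E V = n →
    ∀ (H : V → V → E),
    (∀ x y z, H (x + y) z = H x z + H y z) →
    (∀ x y z, H x (y + z) = H x y + H x z) →
    (∀ (a b : E) (x y : V), H (a • x) (b • y) = ρ a * H x y * b) →
    (∀ x y, H x y = ρ (H y x)) →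
    (∀ x, (∀ y, H x y = 0) → x = 0) →
    ∃ e : Basis (Fin n) E V, (∀ i j, i ≠ j → H (e i) (e j) = 0) ∧ (∀ i, H (e i) (e i) ≠ 0) := by
  intro n
  induction n with
  | zero =>
    intro V _ _ _ hrk H _ _ _ _ _
    have : Subsingleton V := Module.finrank_zero_iff.1 hrk
    exact ⟨Basis.empty V, fun i => i.elim0, fun i => i.elim0⟩
  | succ n ih =>
    intro V _ _ _ hrk H H_add_left H_add_right H_smul H_conj H_nondeg
    have : Nontrivial V := Module.nontrivial_of_finrank_pos (by omega : 0 < finrank E V)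
    obtain ⟨v, hv⟩ := exists_anisotropic ρ hρ_ne H H_add_left H_add_right H_smul H_conj H_nondeg
    set f : V →ₗ[E] E :=
      { toFun := H v
        map_add' := fun y z => H_add_right v y z
        map_smul' := fun b y => by have := H_smul 1 b v y; simp at this; simp [this]; ring } with hf
    have hfv : f v = H v v := rfl
    have hfval : ∀ y, f y = H v y := fun _ => rfl
    -- every z decomposes
    have hdecomp : ∀ z : V, z - ((H v v)⁻¹ * H v z) • v ∈ LinearMap.ker f := by
      intro z
      rw [LinearMap.mem_ker, map_sub, map_smul, hfv, hfval, smul_eq_mul]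
      field_simp
      ring
    have hker_rank : finrank E (LinearMap.ker f) = n := by
      have h1 := LinearMap.finrank_range_add_finrank_ker f
      have hsurj : LinearMap.range f = ⊤ := by
        rw [LinearMap.range_eq_top]
        intro c
        exact ⟨(c * (H v v)⁻¹) • v, by rw [map_smul, hfv, smul_eq_mul]; field_simp⟩
      rw [hsurj, finrank_top, finrank_self, hrk] at h1
      omega
    -- restricted form
    set W := LinearMap.ker f with hW
    set H' : W → W → E := fun x y => H x y with hH'
    have hW_nondeg : ∀ x : W, (∀ y : W, H' x y = 0) → x = 0 := by
      intro x hx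
      have hxv : H (x : V) v = 0 := by
        rw [H_conj]
        have : H v (x : V) = 0 := x.2
        rw [this, map_zero]
      have : (x : V) = 0 := by
        apply H_nondeg
        intro z
        have hz := hdecomp z
        have hxz : H (x : V) (z - ((H v v)⁻¹ * H v z) • v) = 0 := hx ⟨_, hz⟩
        have hxsv : H (x : V) (((H v v)⁻¹ * H v z) • v) = H (x:V) v * ((H v v)⁻¹ * H v z) := by
          have := H_smul 1 ((H v v)⁻¹ * H v z) (x : V) v
          simpa using this
        have hsub : H (x : V) (z - ((H v v)⁻¹ * H v z) • v)
            = H (x:V) z - H (x : V) (((H v v)⁻¹ * H v z) • v) := by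
          have := H_add_right (x : V) (z - ((H v v)⁻¹ * H v z) • v) (((H v v)⁻¹ * H v z) • v)
          simp at this
          linear_combination -this
        rw [hsub, hxsv, hxv] at hxz
        linear_combination hxz
      exact Subtype.ext this
    obtain ⟨b, hb_orth, hb_diag⟩ := ih W hker_rank H'
      (fun x y z => H_add_left x y z)
      (fun x y z => H_add_right x y z)
      (fun a b x y => H_smul a b x y)
      (fun x y => H_conj x y)
      hW_nondeg
    have hli : ∀ (c : E), ∀ x ∈ W, c • v + x = 0 → c = 0 := by
      intro c x hx hcx
      have := congrArg f hcx
      rw [map_add, map_smul, hfv] at this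
      have hx0 : f x = 0 := hx
      rw [hx0, map_zero] at this
      simp at this
      rcases this with h | h
      · exact h
      · exact absurd h hv
    have hsp : ∀ z : V, ∃ c : E, z + c • v ∈ W := by
      intro z
      exact ⟨-((H v v)⁻¹ * H v z), by have := hdecomp z; rwa [sub_eq_add_neg, ← neg_smul] at this⟩
    set e := Basis.mkFinCons v b hli hsp with he
    have hecoe : (e : Fin (n+1) → V) = Fin.cons v ((↑) ∘ b) := Basis.coe_mkFinCons v b hli hsp
    refine ⟨e, ?_, ?_⟩
    · intro i j hij
      rw [hecoe]
      rcases Fin.eq_zero_or_eq_succ i with rfl | ⟨k, rfl⟩ <;>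
        rcases Fin.eq_zero_or_eq_succ j with rfl | ⟨l, rfl⟩
      · exact absurd rfl hij
      · simp only [Fin.cons_zero, Fin.cons_succ, Function.comp_apply]
        exact (b l).2
      · simp only [Fin.cons_zero, Fin.cons_succ, Function.comp_apply]
        rw [H_conj]
        have h0 : H v ((b k : W) : V) = 0 := (b k).2
        rw [h0, map_zero]
      · simp only [Fin.cons_succ, Function.comp_apply]
        have hkl : k ≠ l := by rintro rfl; exact hij rfl
        exact hb_orth k l hkl
    · intro i
      rw [hecoe]
      rcases Fin.eq_zero_or_eq_succ i with rfl | ⟨k, rfl⟩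
      · simpa using hv
      · simp only [Fin.cons_succ, Function.comp_apply]
        exact hb_diag k

end Ortho

def pfst : Fin 6 → Fin 4
  | 0 => 0 | 1 => 0 | 2 => 0 | 3 => 1 | 4 => 1 | 5 => 2
def psnd : Fin 6 → Fin 4
  | 0 => 1 | 1 => 2 | 2 => 3 | 3 => 2 | 4 => 3 | 5 => 3
def sigv : Fin 6 → Fin 6
  | 0 => 5 | 1 => 4 | 2 => 3 | 3 => 2 | 4 => 1 | 5 => 0
noncomputable def epsv (E : Type*) [Field E] : Fin 6 → E
  | 0 => 1 | 1 => -1 | 2 => 1 | 3 => 1 | 4 => -1 | 5 => 1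
noncomputable def Gmat (E : Type*) [Field E] : Fin 6 → Fin 6 → E := fun k l =>
  if l = sigv k then epsv E k else 0

section Ext
variable (E : Type*) [Field E] {V : Type*} [AddCommGroup V] [Module E V]

lemma iM2 (v : Fin 2 → V) : ιMulti E 2 v = ι E (v 0) * ι E (v 1) := by
  rw [ιMulti_apply]; simp [List.ofFn_succ]

lemma iM4 (v : Fin 4 → V) :
    ιMulti E 4 v = ι E (v 0) * (ι E (v 1) * (ι E (v 2) * ι E (v 3))) := by
  rw [ιMulti_apply]; simp [List.ofFn_succ, mul_assoc]

lemma iswap (x y : V) : ι E x * ι E y = -(ι E y * ι E x) :=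
  eq_neg_of_add_eq_zero_left (ι_add_mul_swap x y)

lemma ibub (x y : V) (t : ExteriorAlgebra E V) :
    ι E x * (ι E y * t) = -(ι E y * (ι E x * t)) := by
  rw [← mul_assoc, iswap, ← mul_assoc, neg_mul]

lemma ican (x : V) (t : ExteriorAlgebra E V) : ι E x * (ι E x * t) = 0 := by
  rw [← mul_assoc, ι_sq_zero, zero_mul]

/-- the 6 standard wedge basis vectors of `⋀²V` -/
noncomputable def B6 (e : Fin 4 → V) : Fin 6 → ⋀[E]^2 V :=
  fun k => wedgeι E 2 ![e (pfst k), e (psnd k)]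

lemma span_six (e : Basis (Fin 4) E V) (x : ⋀[E]^2 V) :
    ∃ c : Fin 6 → E, ∑ k, c k • B6 E ⇑e k = x := by
  rw [← Submodule.mem_span_range_iff_exists_fun]
  set K := Submodule.span E (Set.range (B6 E ⇑e)) with hK
  have hsub : (x : ExteriorAlgebra E V) ∈
      Submodule.span E ((⋀[E]^2 V).subtype '' Set.range (B6 E ⇑e)) := by
    have hx : (x : ExteriorAlgebra E V) ∈ Submodule.span E (Set.range (ιMulti E 2)) := by
      rw [ιMulti_span_fixedDegree]; exact x.2
    refine Submodule.span_le.2 ?_ hx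
    rintro z ⟨v, rfl⟩
    have hgen : ∀ k : Fin 6, ι E (e (pfst k)) * ι E (e (psnd k)) ∈
        Submodule.span E ((⋀[E]^2 V).subtype '' Set.range (B6 E ⇑e)) := by
      intro k
      have hbk : ((B6 E ⇑e k : ⋀[E]^2 V) : ExteriorAlgebra E V)
          = ι E (e (pfst k)) * ι E (e (psnd k)) := by
        show ιMulti E 2 ![e (pfst k), e (psnd k)] = _
        rw [iM2]; simp
      exact hbk ▸ Submodule.subset_span ⟨B6 E ⇑e k, ⟨k, rfl⟩, rfl⟩
    have hmem : ∀ i j : Fin 4, ι E (e i) * ι E (e j) ∈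
        Submodule.span E ((⋀[E]^2 V).subtype '' Set.range (B6 E ⇑e)) := by
      intro i j
      fin_cases i <;> fin_cases j
      · rw [ι_sq_zero]; exact Submodule.zero_mem _
      · exact hgen 0
      · exact hgen 1
      · exact hgen 2
      · rw [iswap]; exact Submodule.neg_mem _ (hgen 0)
      · rw [ι_sq_zero]; exact Submodule.zero_mem _
      · exact hgen 3
      · exact hgen 4
      · rw [iswap]; exact Submodule.neg_mem _ (hgen 1)
      · rw [iswap]; exact Submodule.neg_mem _ (hgen 3)
      · rw [ι_sq_zero]; exact Submodule.zero_mem _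
      · exact hgen 5
      · rw [iswap]; exact Submodule.neg_mem _ (hgen 2)
      · rw [iswap]; exact Submodule.neg_mem _ (hgen 4)
      · rw [iswap]; exact Submodule.neg_mem _ (hgen 5)
      · rw [ι_sq_zero]; exact Submodule.zero_mem _
    rw [iM2 E v]
    rw [← Basis.sum_repr e (v 0), ← Basis.sum_repr e (v 1), map_sum, map_sum,
      Finset.sum_mul]
    refine Submodule.sum_mem _ fun i _ => ?_
    rw [Finset.mul_sum]
    refine Submodule.sum_mem _ fun j _ => ?_
    rw [map_smul, map_smul, smul_mul_assoc, mul_smul_comm]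
    exact Submodule.smul_mem _ _ (Submodule.smul_mem _ _ (hmem i j))
  have : (x : ExteriorAlgebra E V) ∈ Submodule.map (⋀[E]^2 V).subtype K := by
    rw [hK, Submodule.map_span]
    exact hsub
  obtain ⟨y, hyK, hyx⟩ := this
  have : y = x := Subtype.ext hyx
  exact this ▸ hyK

set_option maxHeartbeats 3200000 in
lemma wedgeMul_six (e : Fin 4 → V) (k l : Fin 6) :
    wedgeMul E (B6 E e k) (B6 E e l) = Gmat E k l • wedgeι E 4 e := by
  fin_cases k <;> fin_cases l <;>
    (apply Subtype.ext
     show ιMulti E 2 _ * ιMulti E 2 _ = ((Gmat E _ _ • wedgeι E 4 e : ⋀[E]^4 V) : ExteriorAlgebra E V)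
     simp [B6, pfst, psnd, Gmat, sigv, epsv, iM2, wedgeι, mul_assoc, mul_neg, neg_mul, neg_neg,
       smul_smul, one_smul, neg_smul, zero_smul,
       ican E (e 0), ican E (e 1), ican E (e 2), ican E (e 3),
       ibub E (e 1) (e 0), ibub E (e 2) (e 0), ibub E (e 2) (e 1),
       ibub E (e 3) (e 0), ibub E (e 3) (e 1), ibub E (e 3) (e 2),
       iswap E (e 1) (e 0), iswap E (e 2) (e 0), iswap E (e 2) (e 1),
       iswap E (e 3) (e 0), iswap E (e 3) (e 1), iswap E (e 3) (e 2),
       ι_sq_zero]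
     try rfl)
-- nonvanishing of the top wedge of a basis
lemma top_wedge_ne_zero [FiniteDimensional E V] (e : Basis (Fin 4) E V) :
    ιMulti E 4 (⇑e) ≠ 0 := by
  intro h
  classical
  set f : ∀ i : ℕ, V [⋀^Fin i]→ₗ[E] E := fun i =>
    if hi : i = 4 then hi ▸ e.det else 0 with hf
  have h4 : f 4 = e.det := by simp [hf]
  have := congrArg (liftAlternating f) h
  rw [liftAlternating_apply_ιMulti, map_zero, h4, Basis.det_self] at this
  exact one_ne_zero this


end Ext

/-- For a 4-dimensional hermitian space `(V,H)` over `E` with a fixed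
trivialization `d : ⋀⁴V ≅ E`, the `ρ`-semilinear endomorphism `L = ψ⁻¹ ∘ ι ∘ ⋀²φ` of `⋀²V`
(characterized by `d(L(x) ∧ y) = h₂(x, y)` for all `x, y ∈ ⋀²V`) satisfies
`L ∘ L = vol(H,d) · id`, and the scalar `vol(H,d)` lies in `F^×`. -/
theorem L_squared_eq_vol
    {F E : Type*} [Field F] [CharZero F] [Field E] [Algebra F E]
    (hquad : Module.finrank F E = 2)
    (ρ : E →+* E) (hρ_invol : ∀ a, ρ (ρ a) = a) (hρ_ne : ρ ≠ RingHom.id E)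
    (hρ_fixF : ∀ c : F, ρ (algebraMap F E c) = algebraMap F E c)
    (hρ_fixed_field : ∀ a : E, ρ a = a → ∃ c : F, algebraMap F E c = a)
    {V : Type*} [AddCommGroup V] [Module E V] [FiniteDimensional E V]
    (hV4 : Module.finrank E V = 4)
    (H : V → V → E)
    (H_add_left : ∀ x y z, H (x + y) z = H x z + H y z)
    (H_add_right : ∀ x y z, H x (y + z) = H x y + H x z)
    (H_smul : ∀ (a b : E) (x y : V), H (a • x) (b • y) = ρ a * H x y * b)
    (H_conj : ∀ x y, H x y = ρ (H y x))
    (H_nondeg : ∀ x, (∀ y, H x y = 0) → x = 0)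
    (d : (⋀[E]^4 V) ≃ₗ[E] E)
    (h₂ : (⋀[E]^2 V) → (⋀[E]^2 V) → E) (hh₂ : IsDetForm ρ H 2 h₂)
    (h₄ : (⋀[E]^4 V) → (⋀[E]^4 V) → E) (hh₄ : IsDetForm ρ H 4 h₄)
    (L : (⋀[E]^2 V) → (⋀[E]^2 V))
    (L_add : ∀ x y, L (x + y) = L x + L y)
    (L_smul : ∀ (a : E) (x : ⋀[E]^2 V), L (a • x) = ρ a • L x)
    (L_def : ∀ x y : ⋀[E]^2 V, d (wedgeMul E (L x) y) = h₂ x y) :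
    (∀ x : ⋀[E]^2 V, L (L x) = h₄ (d.symm 1) (d.symm 1) • x) ∧
    (∃ c : F, c ≠ 0 ∧ algebraMap F E c = h₄ (d.symm 1) (d.symm 1)) := by
  classical
  obtain ⟨h2al, h2ar, h2sm, h2conj, h2det⟩ := hh₂
  obtain ⟨h4al, h4ar, h4sm, h4conj, h4det⟩ := hh₄
  have hρ_inj : Function.Injective ρ := fun x y hxy => by
    rw [← hρ_invol x, hxy, hρ_invol]
  obtain ⟨e, ho, ha⟩ := exists_orthogonal_basis ρ hρ_ne 4 V hV4 H
    H_add_left H_add_right H_smul H_conj H_nondeg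
  set a : Fin 4 → E := fun i => H (e i) (e i) with ha_def
  have hafix : ∀ i, ρ (a i) = a i := fun i => (H_conj (e i) (e i)).symm
  set w4 : ⋀[E]^4 V := wedgeι E 4 ⇑e with hw4
  set δ : E := d w4 with hδ_def
  have hw4ne : w4 ≠ 0 := by
    intro h0
    apply top_wedge_ne_zero E e
    have : (w4 : ExteriorAlgebra E V) = 0 := by rw [h0]; rfl
    exact this
  have hδ : δ ≠ 0 := fun h0 => hw4ne (d.map_eq_zero_iff.1 h0)
  have hρδ : ρ δ ≠ 0 := fun h0 => hδ (hρ_inj (by rw [h0, map_zero]))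
  set B := B6 E ⇑e with hB
  -- d ∘ (wedgeMul · y) as a linear map
  have wmul_lin : ∀ (y : ⋀[E]^2 V), ∃ Φ : (⋀[E]^2 V) →ₗ[E] E,
      ∀ x, Φ x = d (wedgeMul E x y) := by
    intro y
    refine ⟨{ toFun := fun x => d (wedgeMul E x y), map_add' := ?_, map_smul' := ?_ },
      fun _ => rfl⟩
    · intro u v
      have huv : wedgeMul E (u + v) y = wedgeMul E u y + wedgeMul E v y :=
        Subtype.ext (add_mul _ _ _)
      show d (wedgeMul E (u + v) y) = d (wedgeMul E u y) + d (wedgeMul E v y)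
      rw [huv, map_add]
    · intro c u
      have hcu : wedgeMul E (c • u) y = c • wedgeMul E u y :=
        Subtype.ext (smul_mul_assoc c _ _)
      show d (wedgeMul E (c • u) y) = (RingHom.id E) c • d (wedgeMul E u y)
      rw [hcu, map_smul, RingHom.id_apply]
  have hD : ∀ k l, d (wedgeMul E (B k) (B l)) = Gmat E k l * δ := by
    intro k l
    rw [hB, wedgeMul_six, map_smul, smul_eq_mul, hδ_def, hw4]
  have hG1 : ∀ j k : Fin 6, Gmat E j (sigv k) = if j = k then epsv E k else 0 := by
    intro j k
    fin_cases j <;> fin_cases k <;> simp [Gmat, sigv, epsv]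
  have hG2 : ∀ k l : Fin 6, Gmat E (sigv k) l = if l = k then epsv E k else 0 := by
    intro k l
    fin_cases k <;> fin_cases l <;> simp [Gmat, sigv, epsv]
  have hεne : ∀ k, epsv E k ≠ 0 := by intro k; fin_cases k <;> norm_num [epsv]
  have hσσ : ∀ k, sigv (sigv k) = k := by intro k; fin_cases k <;> rfl
  have hεfix : ∀ k, ρ (epsv E k) = epsv E k := by
    intro k; fin_cases k <;> simp [epsv]
  -- nondegeneracy of the wedge pairing
  have hWnd : ∀ x : ⋀[E]^2 V, (∀ l, d (wedgeMul E x (B l)) = 0) → x = 0 := by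
    intro x hx
    obtain ⟨c, hc⟩ := span_six E e x
    have hc0 : ∀ k, c k = 0 := by
      intro k
      have h1 := hx (sigv k)
      rw [← hc] at h1
      obtain ⟨Φ, hΦ⟩ := wmul_lin (B (sigv k))
      rw [show (∑ j, c j • B6 E ⇑e j) = ∑ j, c j • B j from rfl, ← hΦ, map_sum] at h1
      have h2 : ∀ j, Φ (c j • B j) = c j * (Gmat E j (sigv k) * δ) := by
        intro j
        rw [map_smul, hΦ, hD, smul_eq_mul]
      rw [Finset.sum_congr rfl fun j _ => h2 j] at h1
      have h3 : ∀ j, c j * (Gmat E j (sigv k) * δ)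
          = if j = k then c k * (epsv E k * δ) else 0 := by
        intro j
        rw [hG1]
        by_cases hjk : j = k
        · subst hjk; simp
        · simp [hjk]
      rw [Finset.sum_congr rfl fun j _ => h3 j, Finset.sum_ite_eq' Finset.univ k] at h1
      simp only [Finset.mem_univ, if_true] at h1
      exact (mul_eq_zero.1 h1).resolve_right (mul_ne_zero (hεne k) hδ)
    rw [← hc]
    simp [hc0]
  -- h₂ Gram matrix
  set dA : Fin 6 → E := fun k => a (pfst k) * a (psnd k) with hdA
  have hHB : ∀ k l, h₂ (B k) (B l) = if k = l then dA k else 0 := by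
    intro k l
    rw [hB]
    show h₂ (wedgeι E 2 ![e (pfst k), e (psnd k)]) (wedgeι E 2 ![e (pfst l), e (psnd l)]) = _
    rw [h2det]
    fin_cases k <;> fin_cases l <;>
      simp [Matrix.det_fin_two, pfst, psnd, hdA, ha_def,
        ho 0 1 (by decide), ho 0 2 (by decide), ho 0 3 (by decide),
        ho 1 0 (by decide), ho 1 2 (by decide), ho 1 3 (by decide),
        ho 2 0 (by decide), ho 2 1 (by decide), ho 2 3 (by decide),
        ho 3 0 (by decide), ho 3 1 (by decide), ho 3 2 (by decide)]
  have hρdA : ∀ k, ρ (dA k) = dA k := by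
    intro k
    rw [hdA]
    simp only [map_mul, hafix]
  -- value of h₄ on the top wedge
  have hh4val : h₄ w4 w4 = a 0 * a 1 * a 2 * a 3 := by
    rw [hw4]
    show h₄ (wedgeι E 4 ⇑e) (wedgeι E 4 ⇑e) = _
    rw [h4det]
    have hmat : (Matrix.of fun i j => H (e i) (e j)) = Matrix.diagonal a := by
      ext i j
      by_cases hij : i = j
      · subst hij; simp [ha_def, Matrix.diagonal_apply_eq]
      · simp [Matrix.of_apply, Matrix.diagonal_apply_ne _ hij, ho i j hij]
    rw [hmat, Matrix.det_diagonal, Fin.prod_univ_four]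
  set volE : E := h₄ (d.symm 1) (d.symm 1) with hvolE
  have hdsymm : d.symm 1 = δ⁻¹ • w4 := by
    rw [LinearEquiv.symm_apply_eq, map_smul, smul_eq_mul, ← hδ_def]
    field_simp
  have hvol : volE = (ρ δ)⁻¹ * (a 0 * a 1 * a 2 * a 3) * δ⁻¹ := by
    rw [hvolE, hdsymm, h4sm, hh4val, map_inv₀]
  have hvolne : volE ≠ 0 := by
    rw [hvol]
    exact mul_ne_zero (mul_ne_zero (inv_ne_zero hρδ)
      (mul_ne_zero (mul_ne_zero (mul_ne_zero (ha 0) (ha 1)) (ha 2)) (ha 3)))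
      (inv_ne_zero hδ)
  have hvolfix : ρ volE = volE := (h4conj _ _).symm
  -- L on the basis
  set μ : Fin 6 → E := fun k => dA k * (epsv E k * δ)⁻¹ with hμdef
  have hLB : ∀ k, L (B k) = μ k • B (sigv k) := by
    intro k
    have key : ∀ l, d (wedgeMul E (L (B k) - μ k • B (sigv k)) (B l)) = 0 := by
      intro l
      obtain ⟨Φ, hΦ⟩ := wmul_lin (B l)
      rw [← hΦ, map_sub, map_smul, hΦ, hΦ, L_def, hHB, hD, hG2, smul_eq_mul]
      by_cases hkl : k = l
      · subst hkl
        simp only [if_true, if_pos rfl]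
        rw [hμdef]
        rw [inv_mul_cancel_right₀ (mul_ne_zero (hεne _) hδ), sub_self]
      · simp [hkl, Ne.symm hkl]
    have h0 := hWnd _ key
    rwa [sub_eq_zero] at h0
  -- scalar identity
  have hρμ : ∀ k, ρ (μ k) = dA k * (epsv E k * ρ δ)⁻¹ := by
    intro k
    rw [hμdef]
    simp only [map_mul, map_inv₀, hρdA, hεfix]
  have hμσ : ∀ k, ρ (μ k) * μ (sigv k) = volE := by
    intro k
    rw [hρμ, hμdef, hvol]
    fin_cases k <;>
      · simp only [sigv, epsv, hdA, pfst, psnd]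
        field_simp
  have hLL : ∀ k, L (L (B k)) = volE • B k := by
    intro k
    rw [hLB k, L_smul, hLB (sigv k), hσσ k, smul_smul, hμσ k]
  have L0 : L 0 = 0 := by
    have h0 := L_add 0 0
    simp only [add_zero] at h0
    exact left_eq_add.1 h0
  constructor
  · intro x
    obtain ⟨c, hc⟩ := span_six E e x
    rw [← hc]
    have hsum : ∀ s : Finset (Fin 6),
        L (L (∑ k ∈ s, c k • B6 E ⇑e k)) = ∑ k ∈ s, c k • (volE • B k) := by
      intro s
      induction s using Finset.induction with
      | empty => simp [L0]
      | insert _ _ hni ih =>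
        rw [Finset.sum_insert hni, L_add, L_add, Finset.sum_insert hni, ← ih]
        congr 1
        rw [show c _ • B6 E ⇑e _ = c _ • B _ from rfl, L_smul, L_smul, hρ_invol, hLL]
    rw [hsum]
    rw [Finset.smul_sum]
    exact Finset.sum_congr rfl fun k _ => smul_comm _ _ _
  · obtain ⟨cF, hcF⟩ := hρ_fixed_field volE hvolfix
    refine ⟨cF, ?_, hcF⟩
    intro h0
    rw [h0, map_zero] at hcF
    exact hvolne hcF.symm
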